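/- Let λ₁, λ₂ ∈ ℂ with λ := λ₁/λ₂ ∉ ℚ (in particular aλ₁ + bλ₂ ≠ 0 for all (a,b) ∈ ℤ₍≥0₎² \ {(0,0)}), and let X = Z₀ + R y∂y be a formal vector field with Z₀ = λ₁x∂x + λ₂y∂y and R ∈ ℂ[[x,y]], R(0,0)=0. Then for every G ∈ ℂ[[x,y]] there exists F ∈ ℂ[[x,y]] with X·F = G if and only if G(0,0) = 0; moreover F − F(0,0) is unique. -/

import Mathlib

/- Statement 7 (Lemma irrat-eq-h-form): λ₁/λ₂ ∉ ℚ (in particular aλ₁ + bλ₂ ≠ 0 for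
(a,b) ∈ ℤ≥0² \ {0}).  Let X = Z₀ + R·y∂y with Z₀ = λ₁x∂x + λ₂y∂y, R ∈ ℂ[[x,y]],
R(0,0) = 0.  For G ∈ ℂ[[x,y]] there is F ∈ ℂ[[x,y]] with X·F = G iff G(0,0) = 0;
moreover F − F(0,0) is unique. -/

noncomputable section
open MvPowerSeries

abbrev R2 := MvPowerSeries (Fin 2) ℂ

def pd (i : Fin 2) (f : R2) : R2 :=
  fun d => ((d i : ℂ) + 1) * MvPowerSeries.coeff (d + Finsupp.single i 1) f

/-- X·F where X = Z₀ + R·y∂y = λ₁x∂x + (λ₂ + R)y∂y. -/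
def XD (lam₁ lam₂ : ℂ) (R : R2) (F : R2) : R2 :=
  MvPowerSeries.C lam₁ * MvPowerSeries.X 0 * pd 0 F +
    (MvPowerSeries.C lam₂ + R) * MvPowerSeries.X 1 * pd 1 F

lemma coeff_pd (i : Fin 2) (F : R2) (e : Fin 2 →₀ ℕ) :
    MvPowerSeries.coeff e (pd i F) =
      ((e i : ℂ) + 1) * MvPowerSeries.coeff (e + Finsupp.single i 1) F := rfl

lemma coeff_X_mul_pd (i : Fin 2) (F : R2) (d : Fin 2 →₀ ℕ) :
    MvPowerSeries.coeff d (MvPowerSeries.X i * pd i F) =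
      (d i : ℂ) * MvPowerSeries.coeff d F := by
  rw [MvPowerSeries.X, coeff_monomial_mul]
  by_cases h : Finsupp.single i 1 ≤ d
  · rw [if_pos h, one_mul, coeff_pd]
    have h1 : 1 ≤ d i := by simpa using (Finsupp.single_le_iff.mp h)
    have h2 : (d - Finsupp.single i 1) + Finsupp.single i 1 = d :=
      tsub_add_cancel_of_le h
    have h3 : ((d - Finsupp.single i 1) : Fin 2 →₀ ℕ) i = d i - 1 := by
      rw [Finsupp.tsub_apply]; simp
    rw [h2, h3]
    congr 1
    push_cast [Nat.cast_sub h1]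
    ring
  · rw [if_neg h]
    have : d i = 0 := by
      by_contra hne
      exact h (Finsupp.single_le_iff.mpr (by omega))
    simp [this]

lemma coeff_XD (lam₁ lam₂ : ℂ) (R F : R2) (d : Fin 2 →₀ ℕ) :
    MvPowerSeries.coeff d (XD lam₁ lam₂ R F) =
      ((d 0 : ℂ) * lam₁ + (d 1 : ℂ) * lam₂) * MvPowerSeries.coeff d F +
      ∑ p ∈ Finset.HasAntidiagonal.antidiagonal d,
        MvPowerSeries.coeff p.1 R * (p.2 1 : ℂ) * MvPowerSeries.coeff p.2 F := by
  classical
  rw [XD]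
  rw [mul_assoc, mul_assoc, add_mul, map_add, map_add,
    MvPowerSeries.coeff_C_mul, MvPowerSeries.coeff_C_mul,
    coeff_X_mul_pd, coeff_X_mul_pd, MvPowerSeries.coeff_mul]
  have : ∀ p ∈ Finset.HasAntidiagonal.antidiagonal d,
      MvPowerSeries.coeff p.1 R *
        MvPowerSeries.coeff p.2 (MvPowerSeries.X 1 * pd 1 F) =
      MvPowerSeries.coeff p.1 R * (p.2 1 : ℂ) * MvPowerSeries.coeff p.2 F := by
    intro p _
    rw [coeff_X_mul_pd]; ring
  rw [Finset.sum_congr rfl this]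
  ring

def deg (d : Fin 2 →₀ ℕ) : ℕ := d 0 + d 1

lemma deg_eq_zero_iff {d : Fin 2 →₀ ℕ} : deg d = 0 ↔ d = 0 := by
  constructor
  · intro h
    have h0 : d 0 = 0 ∧ d 1 = 0 := by simp only [deg] at h; omega
    ext i
    fin_cases i <;> simp [h0.1, h0.2]
  · intro h; subst h; simp [deg]

def sol (lam₁ lam₂ : ℂ) (R G : R2) (d : Fin 2 →₀ ℕ) : ℂ :=
  (MvPowerSeries.coeff d G -
    ∑ p ∈ ((Finset.HasAntidiagonal.antidiagonal d).filter (fun p => p.1 ≠ 0)).attach,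
      MvPowerSeries.coeff p.1.1 R * (p.1.2 1 : ℂ) *
        sol lam₁ lam₂ R G p.1.2) /
  ((d 0 : ℂ) * lam₁ + (d 1 : ℂ) * lam₂)
termination_by deg d
decreasing_by
  obtain ⟨⟨e, f⟩, hmem⟩ := p
  simp only [Finset.mem_filter, Finset.HasAntidiagonal.mem_antidiagonal] at hmem
  obtain ⟨hef, hne⟩ := hmem
  have h1 : deg e + deg f = deg d := by
    rw [← hef]; simp only [deg, Finsupp.add_apply]; omega
  have h2 : deg e ≠ 0 := fun h => hne (deg_eq_zero_iff.mp h)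
  simp only [deg] at h1 h2 ⊢
  omega

lemma sum_reduce (R : R2) (hR : MvPowerSeries.constantCoeff R = 0)
    (F : R2) (d : Fin 2 →₀ ℕ) :
    ∑ p ∈ Finset.HasAntidiagonal.antidiagonal d,
        MvPowerSeries.coeff p.1 R * (p.2 1 : ℂ) * MvPowerSeries.coeff p.2 F =
    ∑ p ∈ (Finset.HasAntidiagonal.antidiagonal d).filter (fun p => p.1 ≠ 0),
        MvPowerSeries.coeff p.1 R * (p.2 1 : ℂ) * MvPowerSeries.coeff p.2 F := by
  rw [Finset.sum_filter_of_ne]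
  intro p _ hne h
  apply hne
  rw [h]
  simp only [MvPowerSeries.coeff_zero_eq_constantCoeff, hR, zero_mul]

lemma L_ne_zero (lam₁ lam₂ : ℂ)
    (hres : ∀ a b : ℕ, ¬ (a = 0 ∧ b = 0) → (a : ℂ) * lam₁ + (b : ℂ) * lam₂ ≠ 0)
    {d : Fin 2 →₀ ℕ} (hd : d ≠ 0) :
    ((d 0 : ℂ) * lam₁ + (d 1 : ℂ) * lam₂) ≠ 0 := by
  apply hres
  intro ⟨h0, h1⟩
  exact hd (deg_eq_zero_iff.mp (by simp [deg, h0, h1]))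

theorem stmt7 (lam₁ lam₂ : ℂ) (hlam₂ : lam₂ ≠ 0)
    (hirr : ∀ q : ℚ, lam₁ / lam₂ ≠ (q : ℂ))
    (hres : ∀ a b : ℕ, ¬ (a = 0 ∧ b = 0) → (a : ℂ) * lam₁ + (b : ℂ) * lam₂ ≠ 0)
    (R : R2) (hR : MvPowerSeries.constantCoeff R = 0)
    (G : R2) :
    ((∃ F : R2, XD lam₁ lam₂ R F = G) ↔
      MvPowerSeries.constantCoeff G = 0) ∧
    (∀ F F' : R2, XD lam₁ lam₂ R F = G → XD lam₁ lam₂ R F' = G →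
      F - MvPowerSeries.C (MvPowerSeries.constantCoeff F)
        = F' - MvPowerSeries.C (MvPowerSeries.constantCoeff F')) := by
  classical
  have coeffXD0 : ∀ F : R2, MvPowerSeries.coeff (0 : Fin 2 →₀ ℕ) (XD lam₁ lam₂ R F) = 0 := by
    intro F
    rw [coeff_XD]
    simp [Finset.HasAntidiagonal.antidiagonal_zero]
  constructor
  · constructor
    · rintro ⟨F, hF⟩
      rw [← MvPowerSeries.coeff_zero_eq_constantCoeff, ← hF, coeffXD0]
    · intro hG
      refine ⟨(@id R2 fun d => sol lam₁ lam₂ R G d), ?_⟩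
      ext d
      rw [coeff_XD]
      have hcoeff : ∀ e : Fin 2 →₀ ℕ,
          MvPowerSeries.coeff e ((@id R2 fun d => sol lam₁ lam₂ R G d)) =
            sol lam₁ lam₂ R G e := fun _ => rfl
      rw [hcoeff, sum_reduce R hR]
      by_cases hd : d = 0
      · subst hd
        rw [sol]
        simp only [Finset.HasAntidiagonal.antidiagonal_zero]
        rw [← MvPowerSeries.coeff_zero_eq_constantCoeff] at hG
        rw [hG]
        simp [Finset.filter_singleton]
      · have hL := L_ne_zero lam₁ lam₂ hres hd
        conv_lhs => rw [sol]
        rw [Finset.sum_attach ((Finset.HasAntidiagonal.antidiagonal d).filter (fun p => p.1 ≠ 0))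
          (fun q => MvPowerSeries.coeff q.1 R * (q.2 1 : ℂ) * sol lam₁ lam₂ R G q.2)]
        have : ∀ p ∈ (Finset.HasAntidiagonal.antidiagonal d).filter (fun p => p.1 ≠ 0),
            MvPowerSeries.coeff p.1 R * (p.2 1 : ℂ) * sol lam₁ lam₂ R G p.2 =
            MvPowerSeries.coeff p.1 R * (p.2 1 : ℂ) *
              MvPowerSeries.coeff p.2 ((@id R2 fun d => sol lam₁ lam₂ R G d)) := by
          intro p _; rfl
        rw [Finset.sum_congr rfl this]
        field_simp
        ring
  · intro F F' hF hF'
    have key : ∀ n : ℕ, ∀ d : Fin 2 →₀ ℕ, deg d = n → d ≠ 0 →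
        MvPowerSeries.coeff d F = MvPowerSeries.coeff d F' := by
      intro n
      induction n using Nat.strong_induction_on with
      | _ n ih =>
        intro d hdeg hd
        have heq : MvPowerSeries.coeff d (XD lam₁ lam₂ R F) =
            MvPowerSeries.coeff d (XD lam₁ lam₂ R F') := by rw [hF, hF']
        rw [coeff_XD, coeff_XD] at heq
        have hsum : ∑ p ∈ Finset.HasAntidiagonal.antidiagonal d,
            MvPowerSeries.coeff p.1 R * (p.2 1 : ℂ) * MvPowerSeries.coeff p.2 F =
            ∑ p ∈ Finset.HasAntidiagonal.antidiagonal d,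
            MvPowerSeries.coeff p.1 R * (p.2 1 : ℂ) * MvPowerSeries.coeff p.2 F' := by
          apply Finset.sum_congr rfl
          intro p hp
          rw [Finset.HasAntidiagonal.mem_antidiagonal] at hp
          by_cases h1 : p.1 = 0
          · rw [h1]
            simp only [MvPowerSeries.coeff_zero_eq_constantCoeff, hR, zero_mul]
          · by_cases h2 : p.2 = 0
            · rw [h2]; simp
            · have hlt : deg p.2 < n := by
                have : deg p.1 + deg p.2 = deg d := by
                  rw [← hp]; simp only [deg, Finsupp.add_apply]; omega
                have : deg p.1 ≠ 0 := fun h => h1 (deg_eq_zero_iff.mp h)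
                omega
              rw [ih (deg p.2) hlt p.2 rfl h2]
        rw [hsum] at heq
        have hL := L_ne_zero lam₁ lam₂ hres hd
        have := add_right_cancel heq
        exact mul_left_cancel₀ hL this
    ext d
    rw [map_sub, map_sub, MvPowerSeries.coeff_C, MvPowerSeries.coeff_C]
    by_cases hd : d = 0
    · subst hd
      simp [MvPowerSeries.coeff_zero_eq_constantCoeff]
    · rw [if_neg hd, if_neg hd, sub_zero, sub_zero]
      exact key (deg d) d rfl hd
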